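/- For integers a ≥ 1 and b ≥ 1, R_{ab}/(R_a R_b) is an integer if and only if gcd(a, b) = 1, where R_n = (10^n - 1)/9. -/

import Mathlib

def repunit (n : ℕ) : ℕ := (10 ^ n - 1) / 9

open Finset

private lemma geom_nat (x n : ℕ) (hx : 1 ≤ x) :
    (x - 1) * ∑ i ∈ range n, x ^ i = x ^ n - 1 := by
  induction n with
  | zero => simp
  | succ n ih =>
    rw [sum_range_succ, Nat.mul_add, ih, pow_succ]
    have h1 : 1 ≤ x ^ n := Nat.one_le_pow _ _ hx
    have h2 : x ^ n * 1 ≤ x ^ n * x := Nat.mul_le_mul_left _ hx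
    have h3 : (x - 1) * x ^ n = x ^ n * x - x ^ n := by
      rw [Nat.sub_mul, one_mul, mul_comm]
    omega

private lemma repunit_eq_sum (n : ℕ) : repunit n = ∑ i ∈ range n, 10 ^ i := by
  have h := geom_nat 10 n (by norm_num)
  simp only [repunit]
  omega

private lemma nine_mul_repunit (n : ℕ) : 9 * repunit n = 10 ^ n - 1 := by
  rw [repunit_eq_sum]
  have h := geom_nat 10 n (by norm_num)
  omega

private lemma sum_range_mul_mod {M : Type*} [AddCommMonoid M] (f : ℕ → M) (d m : ℕ) :
    ∑ i ∈ range (d * m), f (i % m) = d • ∑ r ∈ range m, f r := by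
  induction d with
  | zero => simp
  | succ d ih =>
    rw [Nat.succ_mul, Finset.sum_range_add, ih, succ_nsmul]
    congr 1
    refine Finset.sum_congr rfl fun j hj => ?_
    rw [Nat.add_comm, Nat.add_mul_mod_self_right, Nat.mod_eq_of_lt (Finset.mem_range.mp hj)]

private lemma sum_coprime_reindex {M : Type*} [AddCommMonoid M] (f : ℕ → M) (a m : ℕ)
    (h : Nat.Coprime a m) (hm : 1 ≤ m) :
    ∑ r ∈ range m, f (a * r % m) = ∑ s ∈ range m, f s := by
  rcases eq_or_lt_of_le hm with hm1 | hm1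
  · subst hm1; simp
  obtain ⟨c, -, hc⟩ := Nat.exists_mul_mod_eq_one_of_coprime h hm1
  have hac : a * c ≡ 1 [MOD m] := by
    show a * c % m = 1 % m
    rw [hc, Nat.mod_eq_of_lt hm1]
  refine Finset.sum_nbij' (fun r => a * r % m) (fun s => c * s % m) ?_ ?_ ?_ ?_ ?_
  · intro r _; exact Finset.mem_range.mpr (Nat.mod_lt _ (by omega))
  · intro s _; exact Finset.mem_range.mpr (Nat.mod_lt _ (by omega))
  · intro r hr
    show c * (a * r % m) % m = r
    have h1 : c * (a * r % m) ≡ (a * c) * r [MOD m] := by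
      calc c * (a * r % m) ≡ c * (a * r) [MOD m] := Nat.ModEq.mul_left c (Nat.mod_modEq _ _)
        _ = (a * c) * r := by ring
    have h2 : (a * c) * r ≡ 1 * r [MOD m] := Nat.ModEq.mul_right r hac
    have h3 := h1.trans h2
    calc c * (a * r % m) % m = (1 * r) % m := h3
      _ = r := by rw [one_mul, Nat.mod_eq_of_lt (Finset.mem_range.mp hr)]
  · intro s hs
    show a * (c * s % m) % m = s
    have h1 : a * (c * s % m) ≡ (a * c) * s [MOD m] := by
      calc a * (c * s % m) ≡ a * (c * s) [MOD m] := Nat.ModEq.mul_left a (Nat.mod_modEq _ _)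
        _ = (a * c) * s := by ring
    have h2 : (a * c) * s ≡ 1 * s [MOD m] := Nat.ModEq.mul_right s hac
    have h3 := h1.trans h2
    calc a * (c * s % m) % m = (1 * s) % m := h3
      _ = s := by rw [one_mul, Nat.mod_eq_of_lt (Finset.mem_range.mp hs)]
  · intro r _; rfl

private lemma repunit_mul_eq (a b : ℕ) :
    repunit (a * b) = repunit a * ∑ i ∈ range b, 10 ^ (a * i) := by
  rw [repunit_eq_sum, repunit_eq_sum, Finset.mul_sum]
  induction b with
  | zero => simp
  | succ n ih =>
    rw [Nat.mul_succ, Finset.sum_range_add, ih, Finset.sum_range_succ]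
    congr 1
    rw [Finset.sum_mul]
    exact Finset.sum_congr rfl fun j _ => by rw [Nat.add_comm, pow_add]

private lemma nine_d_lt (d : ℕ) (hd : 2 ≤ d) : 9 * d + 1 < 10 ^ d := by
  induction d with
  | zero => omega
  | succ d ih =>
    rcases Nat.lt_or_ge d 2 with h | h
    · interval_cases d <;> norm_num at hd <;> norm_num
    · have := ih h
      have h10 : 10 ^ d ≥ 100 := by
        calc (100:ℕ) = 10 ^ 2 := by norm_num
        _ ≤ 10 ^ d := Nat.pow_le_pow_right (by norm_num) h
      rw [pow_succ]
      omega

theorem repunit_mul_dvd_iff_coprime (a b : ℕ) (ha : 1 ≤ a) (hb : 1 ≤ b) :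
    repunit a * repunit b ∣ repunit (a * b) ↔ Nat.gcd a b = 1 := by
  set d := Nat.gcd a b with hd
  have hdpos : 0 < d := Nat.gcd_pos_of_pos_left _ ha
  set a' := a / d with ha'
  set b' := b / d with hb'
  have hda : a = d * a' := (Nat.mul_div_cancel' (Nat.gcd_dvd_left a b)).symm
  have hdb : b = d * b' := (Nat.mul_div_cancel' (Nat.gcd_dvd_right a b)).symm
  have hcop : Nat.Coprime a' b' := Nat.coprime_div_gcd_div_gcd hdpos
  have hb'pos : 1 ≤ b' := by
    rcases Nat.eq_zero_or_pos b' with h | h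
    · rw [h, mul_zero] at hdb; omega
    · exact h
  set S : ℕ := ∑ i ∈ range b, 10 ^ (a * i) with hS
  set T : ℕ := ∑ j ∈ range b', 10 ^ (d * j) with hT
  set N : ℕ := 10 ^ b - 1 with hN
  have hNpos : 9 ≤ N := by
    have h1 : (10:ℕ) ^ 1 ≤ 10 ^ b := Nat.pow_le_pow_right (by norm_num) hb
    simp only [pow_one] at h1
    rw [hN]; omega
  have hRa : 0 < repunit a := by
    have h9 := nine_mul_repunit a
    have h1 : (10:ℕ) ^ 1 ≤ 10 ^ a := Nat.pow_le_pow_right (by norm_num) ha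
    simp only [pow_one] at h1
    rcases Nat.eq_zero_or_pos (repunit a) with h | h
    · rw [h] at h9; omega
    · exact h
  have step1 : repunit a * repunit b ∣ repunit (a * b) ↔ N ∣ 9 * S := by
    rw [repunit_mul_eq, ← hS, Nat.mul_dvd_mul_iff_left hRa]
    constructor
    · intro h
      have h9 : 9 * repunit b ∣ 9 * S := Nat.mul_dvd_mul_left 9 h
      rw [nine_mul_repunit] at h9
      rwa [hN]
    · intro h
      have h9 : 9 * repunit b ∣ 9 * S := by rw [nine_mul_repunit, ← hN]; exact h
      exact (Nat.mul_dvd_mul_iff_left (by norm_num : (0:ℕ) < 9)).mp h9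
  have hzmod : ((S : ℕ) : ZMod N) = ((d * T : ℕ) : ZMod N) := by
    have hten : (10 : ZMod N) ^ b = 1 := by
      have h1 : ((10 ^ b : ℕ) : ZMod N) = ((N + 1 : ℕ) : ZMod N) := by
        congr 1; rw [hN]; omega
      rw [Nat.cast_add, ZMod.natCast_self, zero_add, Nat.cast_pow] at h1
      simpa using h1
    have e1 : ∀ i : ℕ, (10 : ZMod N) ^ (a * i) = 10 ^ (a * i % b) := by
      intro i
      conv_lhs => rw [← Nat.div_add_mod (a * i) b, pow_add, pow_mul, hten, one_pow, one_mul]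
    push_cast [hS, hT]
    calc ∑ i ∈ range b, (10 : ZMod N) ^ (a * i)
        = ∑ i ∈ range (d * b'), (10:ZMod N) ^ (d * (a' * (i % b') % b')) := by
          rw [← hdb]
          refine Finset.sum_congr rfl fun i _ => ?_
          rw [e1]
          congr 1
          rw [hda, hdb, mul_assoc, Nat.mul_mod_mul_left]
          congr 1
          conv_rhs => rw [Nat.mul_mod, Nat.mod_mod_of_dvd i dvd_rfl, ← Nat.mul_mod]
      _ = d • ∑ r ∈ range b', (10:ZMod N) ^ (d * (a' * r % b')) :=
          sum_range_mul_mod (fun r => (10:ZMod N) ^ (d * (a' * r % b'))) d b'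
      _ = d • ∑ s ∈ range b', (10:ZMod N) ^ (d * s) :=
          congrArg _ (sum_coprime_reindex (fun s => (10:ZMod N) ^ (d * s)) a' b' hcop hb'pos)
      _ = (d : ZMod N) * ∑ s ∈ range b', (10:ZMod N) ^ (d * s) := by
          rw [nsmul_eq_mul]
  have step2 : N ∣ 9 * S ↔ N ∣ 9 * (d * T) := by
    have key : ((9 * S : ℕ) : ZMod N) = ((9 * (d * T) : ℕ) : ZMod N) := by
      push_cast at hzmod ⊢
      rw [hzmod]
    rw [← ZMod.natCast_eq_zero_iff, ← ZMod.natCast_eq_zero_iff, key]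
  have hNT : N = (10 ^ d - 1) * T := by
    have hg := geom_nat (10 ^ d) b' (Nat.one_le_pow _ _ (by norm_num))
    rw [hN, hT, hdb, pow_mul, ← hg]
    congr 1
    exact Finset.sum_congr rfl fun j _ => (pow_mul 10 d j).symm
  have hTpos : 0 < T := by
    rw [hT]
    exact Finset.sum_pos (fun j _ => Nat.pow_pos (by norm_num))
      ⟨0, Finset.mem_range.mpr hb'pos⟩
  have step3 : N ∣ 9 * (d * T) ↔ (10 ^ d - 1) ∣ 9 * d := by
    rw [hNT, show 9 * (d * T) = (9 * d) * T by ring]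
    exact Nat.mul_dvd_mul_iff_right hTpos
  have step4 : (10 ^ d - 1) ∣ 9 * d ↔ d = 1 := by
    constructor
    · intro h
      by_contra hne
      have hd2 : 2 ≤ d := by omega
      have hlt := nine_d_lt d hd2
      have hle : 10 ^ d - 1 ≤ 9 * d := Nat.le_of_dvd (by omega) h
      omega
    · intro h; rw [h]; norm_num
  rw [step1, step2, step3, step4]
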